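/- arXiv:2311.05972 — 2 statements merged into one kernel-verified Lean document; each statement's English description precedes it below -/
import Mathlib

section
/- Let α > −1. Define w_α(z) = (α+1)∫_{|z|²}^1 (1−r)^α log(r/|z|²) dr for z in the unit disc. Then there is a constant 0 < c_α < 1 with c_α (1−|z|²)^{α+1} log(1/|z|²) ≤ w_α(z) ≤ (1−|z|²)^{α+1} log(1/|z|²) for all z ∈ D, z ≠ 0. -/
open MeasureTheory Metric intervalIntegral

private lemma pow_int_val (α : ℝ) (hα : -1 < α) (p : ℝ) :
    ∫ r in p..1, (1 - r) ^ α = (1 - p) ^ (α + 1) / (α + 1) := by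
  have h := intervalIntegral.integral_comp_sub_left (fun u : ℝ => u ^ α) 1 (a := p) (b := 1)
  simp only [sub_self] at h
  rw [h, integral_rpow (Or.inl hα), Real.zero_rpow (by linarith), sub_zero]

private lemma pow_integrable (α : ℝ) (hα : -1 < α) (p q : ℝ) :
    IntervalIntegrable (fun r : ℝ => (1 - r) ^ α) MeasureTheory.volume p q := by
  have h := (intervalIntegrable_rpow' (a := 1 - p) (b := 1 - q) hα).comp_sub_left 1
  simpa using h

private lemma log_cont (x p q : ℝ) (hx : x ≠ 0) (hp : 0 < p) (hpq : p ≤ q) :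
    ContinuousOn (fun r : ℝ => Real.log (r / x)) (Set.uIcc p q) := by
  apply ContinuousOn.log
  · exact (continuous_id.div_const x).continuousOn
  · intro r hr
    rw [Set.uIcc_of_le hpq] at hr
    have hr0 : 0 < r := lt_of_lt_of_le hp hr.1
    exact div_ne_zero hr0.ne' hx

private lemma prod_integrable (α : ℝ) (hα : -1 < α) (x p q : ℝ) (hx : x ≠ 0) (hp : 0 < p) (hpq : p ≤ q) :
    IntervalIntegrable (fun r : ℝ => (1 - r) ^ α * Real.log (r / x))
      MeasureTheory.volume p q :=
  (pow_integrable α hα p q).mul_continuousOn (log_cont x p q hx hp hpq)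

private lemma key (α : ℝ) (hα : -1 < α) (x : ℝ) (hx0 : 0 < x) (hx1 : x < 1) :
    ((1/2 : ℝ) ^ (α + 2)) * (1 - x) ^ (α + 1) * Real.log (1 / x)
        ≤ (α + 1) * ∫ r in x..1, (1 - r) ^ α * Real.log (r / x) ∧
    (α + 1) * (∫ r in x..1, (1 - r) ^ α * Real.log (r / x))
        ≤ (1 - x) ^ (α + 1) * Real.log (1 / x) := by
  have ha1 : (0 : ℝ) < α + 1 := by linarith
  have hL : 0 < Real.log (1 / x) := Real.log_pos (by rw [lt_div_iff₀ hx0]; linarith)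
  set m : ℝ := (1 + x) / 2 with hm
  have hxm : x ≤ m := by rw [hm]; linarith
  have hm1 : m ≤ 1 := by rw [hm]; linarith
  have hm0 : 0 < m := lt_of_lt_of_le hx0 hxm
  constructor
  · -- lower bound
    have hsplit : (∫ r in x..1, (1 - r) ^ α * Real.log (r / x))
        = (∫ r in x..m, (1 - r) ^ α * Real.log (r / x))
          + ∫ r in m..1, (1 - r) ^ α * Real.log (r / x) :=
      (intervalIntegral.integral_add_adjacent_intervals
        (prod_integrable α hα x x m hx0.ne' hx0 hxm)
        (prod_integrable α hα x m 1 hx0.ne' hm0 hm1)).symm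
    have h1 : (0 : ℝ) ≤ ∫ r in x..m, (1 - r) ^ α * Real.log (r / x) := by
      apply intervalIntegral.integral_nonneg hxm
      intro u hu
      apply mul_nonneg (Real.rpow_nonneg (by linarith [hu.2, hm1]) α)
      apply Real.log_nonneg
      rw [le_div_iff₀ hx0]; linarith [hu.1]
    have hlog : (1/2 : ℝ) * Real.log (1 / x) ≤ Real.log (m / x) := by
      have hmx : x ≤ m ^ 2 := by rw [hm]; nlinarith
      have h2 : Real.log x ≤ 2 * Real.log m := by
        have := Real.log_le_log hx0 hmx
        rwa [Real.log_pow, Nat.cast_ofNat] at this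
      rw [Real.log_div hm0.ne' hx0.ne', Real.log_div one_ne_zero hx0.ne', Real.log_one]
      linarith
    have h2 : (∫ r in m..1, (1 - r) ^ α * ((1/2 : ℝ) * Real.log (1 / x)))
        ≤ ∫ r in m..1, (1 - r) ^ α * Real.log (r / x) := by
      apply intervalIntegral.integral_mono_on hm1
      · exact ((pow_integrable α hα m 1).mul_const _)
      · exact prod_integrable α hα x m 1 hx0.ne' hm0 hm1
      · intro u hu
        apply mul_le_mul_of_nonneg_left _ (Real.rpow_nonneg (by linarith [hu.2]) α)
        refine hlog.trans (Real.log_le_log (div_pos hm0 hx0) ?_)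
        gcongr
        exact hu.1
    have h3 : (∫ r in m..1, (1 - r) ^ α * ((1/2 : ℝ) * Real.log (1 / x)))
        = ((1 - m) ^ (α + 1) / (α + 1)) * ((1/2 : ℝ) * Real.log (1 / x)) := by
      rw [intervalIntegral.integral_mul_const, pow_int_val α hα m]
    have hmv : (1 - m) ^ (α + 1) = (1 - x) ^ (α + 1) * (1/2 : ℝ) ^ (α + 1) := by
      have : 1 - m = (1 - x) * (1/2 : ℝ) := by rw [hm]; ring
      rw [this, Real.mul_rpow (by linarith) (by norm_num)]
    have hc : ((1/2 : ℝ)) ^ (α + 2) = (1/2 : ℝ) ^ (α + 1) * (1/2 : ℝ) := by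
      rw [show α + 2 = (α + 1) + 1 by ring, Real.rpow_add (by norm_num : (0:ℝ) < 1/2),
        Real.rpow_one]
    calc ((1/2 : ℝ) ^ (α + 2)) * (1 - x) ^ (α + 1) * Real.log (1 / x)
        = (α + 1) * (((1 - m) ^ (α + 1) / (α + 1)) * ((1/2 : ℝ) * Real.log (1 / x))) := by
          rw [hmv, hc]; field_simp
      _ ≤ (α + 1) * ∫ r in m..1, (1 - r) ^ α * Real.log (r / x) := by
          rw [← h3]; exact mul_le_mul_of_nonneg_left h2 ha1.le
      _ ≤ (α + 1) * ∫ r in x..1, (1 - r) ^ α * Real.log (r / x) := by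
          rw [hsplit]; nlinarith
  · -- upper bound
    have h2 : (∫ r in x..1, (1 - r) ^ α * Real.log (r / x))
        ≤ ∫ r in x..1, (1 - r) ^ α * Real.log (1 / x) := by
      apply intervalIntegral.integral_mono_on hx1.le
      · exact prod_integrable α hα x x 1 hx0.ne' hx0 hx1.le
      · exact ((pow_integrable α hα x 1).mul_const _)
      · intro u hu
        apply mul_le_mul_of_nonneg_left _ (Real.rpow_nonneg (by linarith [hu.2]) α)
        apply Real.log_le_log (div_pos (lt_of_lt_of_le hx0 hu.1) hx0)
        gcongr
        exact hu.2
    have h3 : (∫ r in x..1, (1 - r) ^ α * Real.log (1 / x))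
        = ((1 - x) ^ (α + 1) / (α + 1)) * Real.log (1 / x) := by
      rw [intervalIntegral.integral_mul_const, pow_int_val α hα x]
    calc (α + 1) * (∫ r in x..1, (1 - r) ^ α * Real.log (r / x))
        ≤ (α + 1) * (((1 - x) ^ (α + 1) / (α + 1)) * Real.log (1 / x)) := by
          rw [← h3]; exact mul_le_mul_of_nonneg_left h2 ha1.le
      _ = (1 - x) ^ (α + 1) * Real.log (1 / x) := by field_simp

/-- For `α > −1` and `w_α(z) = (α+1)∫_{|z|²}^1 (1−r)^α log(r/|z|²) dr`, there is
`0 < c_α < 1` with `c_α (1−|z|²)^{α+1} log(1/|z|²) ≤ w_α(z) ≤ (1−|z|²)^{α+1} log(1/|z|²)`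
for all `z` in the punctured unit disc. -/
theorem stmt_15 (α : ℝ) (hα : -1 < α) :
    ∃ c : ℝ, 0 < c ∧ c < 1 ∧
      ∀ z : ℂ, z ∈ Metric.ball (0:ℂ) 1 → z ≠ 0 →
        c * (1 - ‖z‖ ^ 2) ^ (α + 1) * Real.log (1 / ‖z‖ ^ 2)
            ≤ (α + 1) * ∫ r in (‖z‖ ^ 2)..1,
                (1 - r) ^ α * Real.log (r / ‖z‖ ^ 2) ∧
        (α + 1) * (∫ r in (‖z‖ ^ 2)..1,
              (1 - r) ^ α * Real.log (r / ‖z‖ ^ 2))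
            ≤ (1 - ‖z‖ ^ 2) ^ (α + 1) * Real.log (1 / ‖z‖ ^ 2) := by
  refine ⟨(1/2 : ℝ) ^ (α + 2), Real.rpow_pos_of_pos (by norm_num) _,
    Real.rpow_lt_one (by norm_num) (by norm_num) (by linarith), ?_⟩
  intro z hz hz0
  have h1 : ‖z‖ < 1 := by simpa using hz
  have h0 : 0 < ‖z‖ := by simpa using hz0
  exact key α hα (‖z‖ ^ 2) (pow_pos h0 2) (by nlinarith)
end

section
/- Let v be a nonnegative subharmonic function on the unit disc, α ≥ −1, and set dμ(z) = (1−|z|²)^{α+2} v(z) dA(z), d\tilde{μ}(z) = |z|² dμ(z). Then there is a constant 0 < c_α < 1, independent of v, such that c_α ‖μ‖_{C(α)} ≤ ‖\tilde{μ}‖_{C(α)} ≤ ‖μ‖_{C(α)}, where ‖ν‖_{C(α)} = sup_{a∈D} ν(S(a))/(1−|a|²)^{α+2} is the (α+2)-Carleson norm over Carleson boxes S(a). -/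
open MeasureTheory Metric
open scoped ENNReal

/-- `v` is subharmonic on the unit disc: continuous and satisfying the sub-mean
value inequality on every circle contained in the disc. -/
def SubharmonicOnDisc (v : ℂ → ℝ) : Prop :=
  ContinuousOn v (Metric.ball 0 1) ∧
  ∀ z ∈ Metric.ball (0:ℂ) 1, ∀ r : ℝ, 0 < r → Metric.closedBall z r ⊆ Metric.ball (0:ℂ) 1 →
    v z ≤ (∫ θ in (0:ℝ)..(2 * Real.pi), v (z + (r : ℂ) * Complex.exp ((θ : ℂ) * Complex.I)))
            / (2 * Real.pi)

/-- The Carleson box `S(a) = {r e^{it} : |a| ≤ r < 1, |t − arg a| ≤ π(1−|a|)}`. -/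
def carlesonBox (a : ℂ) : Set ℂ :=
  {z : ℂ | ‖a‖ ≤ ‖z‖ ∧ ‖z‖ < 1 ∧
    |Complex.arg (z * (starRingEnd ℂ) a)| ≤ Real.pi * (1 - ‖a‖)}

/-- The `(α+2)`-Carleson norm `‖μ‖_{C(α)} = sup_{a ∈ D} μ(S(a))/(1−|a|²)^{α+2}`. -/
noncomputable def carlesonNorm (α : ℝ) (μ : Measure ℂ) : ℝ≥0∞ :=
  ⨆ a : Metric.ball (0:ℂ) 1,
    μ (carlesonBox a) / ENNReal.ofReal ((1 - ‖(a : ℂ)‖ ^ 2) ^ (α + 2))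

lemma measurableSet_carlesonBox (a : ℂ) : MeasurableSet (carlesonBox a) := by
  have h1 : MeasurableSet {z : ℂ | ‖a‖ ≤ ‖z‖} :=
    measurableSet_le measurable_const continuous_norm.measurable
  have h2 : MeasurableSet {z : ℂ | ‖z‖ < 1} :=
    measurableSet_lt continuous_norm.measurable measurable_const
  have h3 : MeasurableSet {z : ℂ |
      |Complex.arg (z * (starRingEnd ℂ) a)| ≤ Real.pi * (1 - ‖a‖)} :=
    measurableSet_le ((Complex.measurable_arg.comp (measurable_mul_const _)).abs)
      measurable_const
  have : carlesonBox a = {z : ℂ | ‖a‖ ≤ ‖z‖} ∩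
      ({z : ℂ | ‖z‖ < 1} ∩ {z : ℂ |
        |Complex.arg (z * (starRingEnd ℂ) a)| ≤ Real.pi * (1 - ‖a‖)}) := by
    ext z; simp [carlesonBox, and_assoc]
  rw [this]
  exact h1.inter (h2.inter h3)

lemma aux_ofReal_mul_le {s t : ℝ} (hs : 0 ≤ s) (hs1 : s ≤ 1) :
    ENNReal.ofReal (s * t) ≤ ENNReal.ofReal t := by
  rcases le_total t 0 with ht | ht
  · have : s * t ≤ 0 := mul_nonpos_iff.2 (Or.inl ⟨hs, ht⟩)
    simp [ENNReal.ofReal_eq_zero.2 this]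
  · exact ENNReal.ofReal_le_ofReal (by nlinarith)

lemma aux_ofReal_le_mul {c s t : ℝ} (hc : 0 ≤ c) (h : 1 ≤ c * s) :
    ENNReal.ofReal t ≤ ENNReal.ofReal c * ENNReal.ofReal (s * t) := by
  rcases le_total t 0 with ht | ht
  · simp [ENNReal.ofReal_eq_zero.2 ht]
  · rw [← ENNReal.ofReal_mul hc]
    exact ENNReal.ofReal_le_ofReal (by nlinarith)

lemma circle_to_annulus (W : ℂ → ℝ) (hW : Continuous W) (hW0 : ∀ z, 0 ≤ W z)
    (z₀ : ℂ) (hz₀ : ‖z₀‖ ≤ 1/4)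
    (hsub : ∀ r : ℝ, r ∈ Set.Ioo (1/2:ℝ) (5/8) →
      2 * Real.pi * W z₀ ≤ ∫ θ in (0:ℝ)..(2*Real.pi),
        W (z₀ + (r:ℂ) * Complex.exp ((θ:ℂ) * Complex.I))) :
    Real.pi / 8 * W z₀ ≤ ∫ ζ in {ζ : ℂ | ‖ζ‖ ∈ Set.Icc (1/4:ℝ) (7/8)}, W ζ := by
  set A : Set ℂ := {ζ : ℂ | ‖ζ‖ ∈ Set.Icc (1/2:ℝ) (5/8)} with hAdef
  set B : Set ℂ := {ζ : ℂ | ‖ζ‖ ∈ Set.Icc (1/4:ℝ) (7/8)} with hBdef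
  have hAclosed : IsClosed A := isClosed_Icc.preimage continuous_norm
  have hBclosed : IsClosed B := isClosed_Icc.preimage continuous_norm
  have hAmeas : MeasurableSet A := hAclosed.measurableSet
  have hBmeas : MeasurableSet B := hBclosed.measurableSet
  have hAcpt : IsCompact A := by
    refine Metric.isCompact_of_isClosed_isBounded hAclosed ?_
    refine (Metric.isBounded_closedBall (x := (0:ℂ)) (r := (5/8:ℝ))).subset ?_
    intro ζ hζ
    rw [Metric.mem_closedBall, dist_zero_right]
    exact hζ.2
  have hBcpt : IsCompact B := by
    refine Metric.isCompact_of_isClosed_isBounded hBclosed ?_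
    refine (Metric.isBounded_closedBall (x := (0:ℂ)) (r := (7/8:ℝ))).subset ?_
    intro ζ hζ
    rw [Metric.mem_closedBall, dist_zero_right]
    exact hζ.2
  have hWt : Continuous fun ζ : ℂ => W (z₀ + ζ) := hW.comp (continuous_const.add continuous_id)
  set f : ℂ → ℝ := A.indicator (fun ζ => W (z₀ + ζ)) with hfdef
  have hf_nonneg : ∀ ζ, 0 ≤ f ζ := fun ζ => Set.indicator_nonneg (fun x _ => hW0 _) ζ
  have hfint : Integrable f := by
    rw [hfdef, integrable_indicator_iff hAmeas]
    exact ContinuousOn.integrableOn_compact hAcpt hWt.continuousOn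
  have hfmeas : Measurable f := (hWt.measurable).indicator hAmeas
  -- the polar map
  have hemap : Continuous fun p : ℝ × ℝ => (↑p.1 * Complex.exp (↑p.2 * Complex.I) : ℂ) := by
    exact (Complex.continuous_ofReal.comp continuous_fst).mul
      (Complex.continuous_exp.comp ((Complex.continuous_ofReal.comp continuous_snd).mul
        continuous_const))
  have habs : ∀ p : ℝ × ℝ, ‖(↑p.1 * Complex.exp (↑p.2 * Complex.I))‖ = |p.1| := by
    intro p
    rw [norm_mul, Complex.norm_real, Real.norm_eq_abs, Complex.norm_exp_ofReal_mul_I, mul_one]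
  set G : ℝ × ℝ → ℝ := fun p => p.1 * f (↑p.1 * Complex.exp (↑p.2 * Complex.I)) with hGdef
  have hsymmG : ∀ p : ℝ × ℝ, p.1 • f (Complex.polarCoord.symm p) = G p := by
    intro p
    rw [Complex.polarCoord_symm_apply, smul_eq_mul, hGdef]
    congr 2
    rw [Complex.exp_mul_I, ← Complex.ofReal_cos, ← Complex.ofReal_sin]
  have hGmeas : Measurable G :=
    measurable_fst.mul (hfmeas.comp hemap.measurable)
  have hG_nonneg_target : ∀ p ∈ polarCoord.target, 0 ≤ G p := by
    intro p hp
    rw [polarCoord_target] at hp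
    exact mul_nonneg (le_of_lt hp.1) (hf_nonneg _)
  -- integrability on the target
  obtain ⟨Mw, hMw⟩ := hAcpt.exists_bound_of_continuousOn hWt.continuousOn
  have hGint : IntegrableOn G polarCoord.target := by
    set K' : Set (ℝ × ℝ) := Set.Icc (1/2:ℝ) (5/8) ×ˢ Set.Icc (-Real.pi) Real.pi with hK'def
    have hK'meas : MeasurableSet K' := measurableSet_Icc.prod measurableSet_Icc
    have hBnd : Integrable (K'.indicator fun _ => (5/8 * max Mw 0 : ℝ)) := by
      rw [integrable_indicator_iff hK'meas]
      exact integrableOn_const ((isCompact_Icc.prod isCompact_Icc).measure_lt_top.ne)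
    refine Integrable.mono' hBnd.restrict hGmeas.aestronglyMeasurable ?_
    filter_upwards [ae_restrict_mem polarCoord.open_target.measurableSet] with p hp
    rw [polarCoord_target] at hp
    by_cases hmem : (↑p.1 * Complex.exp (↑p.2 * Complex.I) : ℂ) ∈ A
    · have h1 : |p.1| ∈ Set.Icc (1/2:ℝ) (5/8) := by rw [← habs p]; exact hmem
      have hp1 : 0 < p.1 := hp.1
      have hpK : p ∈ K' := by
        refine ⟨?_, ⟨le_of_lt hp.2.1, le_of_lt hp.2.2⟩⟩
        rwa [abs_of_pos hp1] at h1
      rw [Set.indicator_of_mem hpK]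
      have : f (↑p.1 * Complex.exp (↑p.2 * Complex.I)) = W (z₀ + ↑p.1 * Complex.exp (↑p.2 * Complex.I)) :=
        Set.indicator_of_mem hmem _
      rw [Real.norm_eq_abs, hGdef]
      simp only []
      rw [this, abs_mul]
      have h2 : |W (z₀ + ↑p.1 * Complex.exp (↑p.2 * Complex.I))| ≤ max Mw 0 := by
        rcases hMw _ hmem with h
        rw [Real.norm_eq_abs] at h
        exact le_trans h (le_max_left _ _)
      have h3 : |p.1| ≤ 5/8 := (abs_of_pos hp1) ▸ h1.2
      exact mul_le_mul h3 h2 (abs_nonneg _) (by norm_num)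
    · have : f (↑p.1 * Complex.exp (↑p.2 * Complex.I)) = 0 := Set.indicator_of_notMem hmem _
      rw [hGdef]
      simp only [this, mul_zero, norm_zero]
      exact Set.indicator_nonneg (fun x _ => by positivity) p
  -- polar change of variables
  have hpolar : ∫ ζ, f ζ = ∫ p in polarCoord.target, G p := by
    rw [← Complex.integral_comp_polarCoord_symm f]
    exact setIntegral_congr_fun polarCoord.open_target.measurableSet fun p _ => hsymmG p
  set S : Set (ℝ × ℝ) := Set.Ioo (1/2:ℝ) (5/8) ×ˢ Set.Ioo (-Real.pi) Real.pi with hSdef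
  have hSsub : S ⊆ polarCoord.target := by
    rw [polarCoord_target, hSdef]
    refine Set.prod_mono ?_ le_rfl
    intro r hr; exact lt_trans (by norm_num) hr.1
  have hmono1 : ∫ p in S, G p ≤ ∫ p in polarCoord.target, G p := by
    refine setIntegral_mono_set hGint ?_ (HasSubset.Subset.eventuallyLE hSsub)
    filter_upwards [ae_restrict_mem polarCoord.open_target.measurableSet] with p hp
    exact hG_nonneg_target p hp
  have hSint : IntegrableOn G S := hGint.mono_set hSsub
  have hprod : ∫ p in S, G p
      = ∫ r in Set.Ioo (1/2:ℝ) (5/8), ∫ θ in Set.Ioo (-Real.pi) Real.pi, G (r, θ) := by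
    rw [hSdef]
    rw [Measure.volume_eq_prod] at hSint ⊢
    exact setIntegral_prod G hSint
  -- inner bound
  have hinner : ∀ r ∈ Set.Ioo (1/2:ℝ) (5/8),
      Real.pi * W z₀ ≤ ∫ θ in Set.Ioo (-Real.pi) Real.pi, G (r, θ) := by
    intro r hr
    have hr0 : 0 < r := lt_trans (by norm_num) hr.1
    have hfire : ∀ θ : ℝ, G (r, θ) = r * W (z₀ + (r:ℂ) * Complex.exp ((θ:ℂ) * Complex.I)) := by
      intro θ
      rw [hGdef]
      simp only []
      congr 1
      refine Set.indicator_of_mem ?_ _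
      rw [hAdef, Set.mem_setOf_eq, habs (r, θ)]
      simp only []
      rw [abs_of_pos hr0]
      exact ⟨le_of_lt hr.1, le_of_lt hr.2⟩
    rw [setIntegral_congr_fun measurableSet_Ioo (fun θ _ => hfire θ)]
    have hX : ∫ θ in Set.Ioo (-Real.pi) Real.pi,
        r * W (z₀ + (r:ℂ) * Complex.exp ((θ:ℂ) * Complex.I))
        = r * ∫ θ in Set.Ioo (-Real.pi) Real.pi,
            W (z₀ + (r:ℂ) * Complex.exp ((θ:ℂ) * Complex.I)) := by
      simpa [smul_eq_mul] using
        integral_smul (μ := volume.restrict (Set.Ioo (-Real.pi) Real.pi)) r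
          (fun θ : ℝ => W (z₀ + (r:ℂ) * Complex.exp ((θ:ℂ) * Complex.I)))
    rw [hX]
    set X := ∫ θ in Set.Ioo (-Real.pi) Real.pi,
        W (z₀ + (r:ℂ) * Complex.exp ((θ:ℂ) * Complex.I)) with hXdef
    have hper : Function.Periodic
        (fun θ : ℝ => W (z₀ + (r:ℂ) * Complex.exp ((θ:ℂ) * Complex.I))) (2 * Real.pi) := by
      intro θ
      have hexp : Complex.exp ((↑(θ + 2*Real.pi) : ℂ) * Complex.I)
          = Complex.exp ((θ:ℂ) * Complex.I) := by
        push_cast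
        rw [add_mul, Complex.exp_add, Complex.exp_two_pi_mul_I, mul_one]
      simp only [hexp]
    have h2π : 2 * Real.pi * W z₀ ≤ X := by
      have h1 := hsub r hr
      have h2 := hper.intervalIntegral_add_eq (-Real.pi) 0
      rw [zero_add] at h2
      rw [show -Real.pi + 2*Real.pi = Real.pi by ring] at h2
      have h3 : (∫ θ in (-Real.pi)..Real.pi,
          W (z₀ + (r:ℂ) * Complex.exp ((θ:ℂ) * Complex.I))) = X := by
        rw [intervalIntegral.integral_of_le (by linarith [Real.pi_pos])]
        rw [hXdef, ← integral_Ioc_eq_integral_Ioo]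
      have h4 : X = ∫ θ in (0:ℝ)..(2*Real.pi),
          W (z₀ + (r:ℂ) * Complex.exp ((θ:ℂ) * Complex.I)) := h3.symm.trans h2
      linarith
    have hX0 : 0 ≤ X := setIntegral_nonneg measurableSet_Ioo (fun θ _ => hW0 _)
    nlinarith [Real.pi_pos, hW0 z₀, hr.1]
  -- outer bound
  have hIntOuter : IntegrableOn
      (fun r => ∫ θ in Set.Ioo (-Real.pi) Real.pi, G (r, θ)) (Set.Ioo (1/2:ℝ) (5/8)) := by
    have h0 := hSint
    rw [hSdef, IntegrableOn, Measure.volume_eq_prod, ← Measure.prod_restrict] at h0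
    exact h0.integral_prod_left
  have hconst : IntegrableOn (fun _ : ℝ => Real.pi * W z₀) (Set.Ioo (1/2:ℝ) (5/8)) :=
    integrableOn_const (by rw [Real.volume_Ioo]; exact ENNReal.ofReal_ne_top)
  have houter := setIntegral_mono_on hconst hIntOuter measurableSet_Ioo hinner
  rw [setIntegral_const, measureReal_def, Real.volume_Ioo] at houter
  rw [ENNReal.toReal_ofReal (by norm_num)] at houter
  rw [smul_eq_mul] at houter
  -- translation
  have htrans : ∫ ζ, f ζ ≤ ∫ ζ in B, W ζ := by
    have hstep1 : (fun ζ : ℂ => A.indicator (fun w => W (z₀ + w)) ((z₀ + ζ) - z₀)) = f := by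
      funext ζ; rw [add_sub_cancel_left]
    have hBint : Integrable (B.indicator W) := by
      rw [integrable_indicator_iff hBmeas]
      exact ContinuousOn.integrableOn_compact hBcpt hW.continuousOn
    have hshift : Integrable (fun ξ : ℂ => A.indicator (fun w => W (z₀ + w)) (ξ - z₀)) :=
      hfint.comp_sub_right z₀
    calc ∫ ζ, f ζ
        = ∫ ζ, (fun ξ : ℂ => A.indicator (fun w => W (z₀ + w)) (ξ - z₀)) (z₀ + ζ) := by
          rw [show (fun ζ : ℂ => (fun ξ : ℂ => A.indicator (fun w => W (z₀ + w)) (ξ - z₀)) (z₀ + ζ)) = f from hstep1]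
      _ = ∫ ξ, A.indicator (fun w => W (z₀ + w)) (ξ - z₀) :=
          integral_add_left_eq_self (fun ξ : ℂ => A.indicator (fun w => W (z₀ + w)) (ξ - z₀)) z₀
      _ ≤ ∫ ξ, B.indicator W ξ := by
          refine integral_mono hshift hBint ?_
          intro ξ
          show A.indicator (fun w => W (z₀ + w)) (ξ - z₀) ≤ B.indicator W ξ
          by_cases hm : ξ - z₀ ∈ A
          · rw [Set.indicator_of_mem hm]
            have hub : ‖ξ‖ ≤ ‖(ξ - z₀)‖ + ‖z₀‖ := by
              have := norm_add_le (ξ - z₀) z₀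
              rwa [sub_add_cancel] at this
            have hlb : ‖(ξ - z₀)‖ ≤ ‖ξ‖ + ‖z₀‖ := by
              have := norm_sub_le ξ z₀
              exact this
            have hBm : ξ ∈ B := by
              rw [hBdef, Set.mem_setOf_eq]
              constructor
              · have := hm.1; linarith
              · have := hm.2; linarith
            rw [Set.indicator_of_mem hBm, add_sub_cancel]
          · rw [Set.indicator_of_notMem hm]
            exact Set.indicator_nonneg (fun x _ => hW0 x) ξ
      _ = ∫ ξ in B, W ξ := integral_indicator hBmeas
  -- assemble
  have hfinal : Real.pi / 8 * W z₀ ≤ ∫ ζ, f ζ := by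
    rw [hpolar]
    calc Real.pi / 8 * W z₀ = (5/8 - 1/2) * (Real.pi * W z₀) := by ring
      _ ≤ ∫ p in S, G p := by rw [hprod]; exact houter
      _ ≤ ∫ p in polarCoord.target, G p := hmono1
  linarith [htrans, hfinal]

lemma hard_bound (α : ℝ) (hα : -1 ≤ α) (v : ℂ → ℝ)
    (hvc : ContinuousOn v (Metric.ball 0 1))
    (hvs : ∀ z ∈ Metric.ball (0:ℂ) 1, ∀ r : ℝ, 0 < r →
      Metric.closedBall z r ⊆ Metric.ball (0:ℂ) 1 →
      v z ≤ (∫ θ in (0:ℝ)..(2 * Real.pi), v (z + (r : ℂ) * Complex.exp ((θ : ℂ) * Complex.I)))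
              / (2 * Real.pi))
    (hv0 : ∀ z ∈ Metric.ball (0:ℂ) 1, 0 ≤ v z) :
    ((volume.restrict (Metric.ball (0:ℂ) 1)).withDensity
        fun z => ENNReal.ofReal ((1 - ‖z‖ ^ 2) ^ (α + 2) * v z))
      (Metric.ball (0:ℂ) (1/4))
    ≤ ENNReal.ofReal ((8 / Real.pi) * (16 * ((64:ℝ)/15) ^ (α+2))
          * (volume (Metric.ball (0:ℂ) (1/4))).toReal)
      * ((volume.restrict (Metric.ball (0:ℂ) 1)).withDensity
          fun z => ENNReal.ofReal (‖z‖ ^ 2 * ((1 - ‖z‖ ^ 2) ^ (α + 2) * v z)))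
        Set.univ := by
  have hα2 : (0:ℝ) ≤ α + 2 := by linarith
  set B : Set ℂ := {ζ : ℂ | ‖ζ‖ ∈ Set.Icc (1/4:ℝ) (7/8)} with hBdef
  have hBclosed : IsClosed B := isClosed_Icc.preimage continuous_norm
  have hBmeas : MeasurableSet B := hBclosed.measurableSet
  have hBcpt : IsCompact B := by
    refine Metric.isCompact_of_isClosed_isBounded hBclosed ?_
    refine (Metric.isBounded_closedBall (x := (0:ℂ)) (r := (7/8:ℝ))).subset ?_
    intro ζ hζ
    rw [Metric.mem_closedBall, dist_zero_right]
    exact hζ.2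
  have hBsub78 : B ⊆ Metric.closedBall (0:ℂ) (7/8) := by
    intro ζ hζ
    rw [Metric.mem_closedBall, dist_zero_right]
    exact hζ.2
  have hsub78 : Metric.closedBall (0:ℂ) (7/8) ⊆ Metric.ball (0:ℂ) 1 :=
    Metric.closedBall_subset_ball (by norm_num)
  have hBsub01 : B ⊆ Metric.ball (0:ℂ) 1 := fun ζ hζ => hsub78 (hBsub78 hζ)
  -- Tietze extension
  obtain ⟨g, hg⟩ := ContinuousMap.exists_restrict_eq (Y := ℝ)
    (Metric.isClosed_closedBall (x := (0:ℂ)) (ε := (7/8:ℝ)))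
    ⟨Set.restrict _ v, (hvc.mono hsub78).restrict⟩
  have hgx : ∀ x, x ∈ Metric.closedBall (0:ℂ) (7/8) → g x = v x := by
    intro x hx
    have := ContinuousMap.congr_fun hg ⟨x, hx⟩
    exact this
  set W : ℂ → ℝ := fun z => max (g z) 0 with hWdef
  have hWcont : Continuous W := (map_continuous g).max continuous_const
  have hW0 : ∀ z, 0 ≤ W z := fun z => le_max_right _ _
  have hWv : ∀ x, x ∈ Metric.closedBall (0:ℂ) (7/8) → W x = v x := by
    intro x hx
    rw [hWdef]
    simp only []
    rw [hgx x hx]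
    exact max_eq_left (hv0 x (hsub78 hx))
  -- maximum point
  obtain ⟨z₀, hz₀mem, hz₀max⟩ := (isCompact_closedBall (0:ℂ) (1/4)).exists_isMaxOn
    ⟨0, Metric.mem_closedBall_self (by norm_num)⟩ hWcont.continuousOn
  have hz₀abs : ‖z₀‖ ≤ 1/4 := by
    rw [Metric.mem_closedBall, dist_zero_right] at hz₀mem
    exact hz₀mem
  have hz₀78 : z₀ ∈ Metric.closedBall (0:ℂ) (7/8) := by
    rw [Metric.mem_closedBall, dist_zero_right]
    linarith
  -- sub-mean inequalities for W
  have hWsub : ∀ r : ℝ, r ∈ Set.Ioo (1/2:ℝ) (5/8) →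
      2 * Real.pi * W z₀ ≤ ∫ θ in (0:ℝ)..(2*Real.pi),
        W (z₀ + (r:ℂ) * Complex.exp ((θ:ℂ) * Complex.I)) := by
    intro r hr
    have hr0 : (0:ℝ) < r := lt_trans (by norm_num) hr.1
    have hz₀ball : z₀ ∈ Metric.ball (0:ℂ) 1 := by
      rw [Metric.mem_ball, dist_zero_right]
      linarith
    have hcb : Metric.closedBall z₀ r ⊆ Metric.ball (0:ℂ) 1 := by
      intro x hx
      rw [Metric.mem_closedBall] at hx
      rw [Metric.mem_ball]
      have h1 : dist x 0 ≤ dist x z₀ + dist z₀ 0 := dist_triangle _ _ _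
      have h2 : dist z₀ 0 ≤ 1/4 := by
        rw [dist_zero_right]; exact hz₀abs
      have h3 : r < 5/8 := hr.2
      linarith
    have h1 := hvs z₀ hz₀ball r hr0 hcb
    have hcirc : ∀ θ : ℝ, z₀ + (r:ℂ) * Complex.exp ((θ:ℂ) * Complex.I)
        ∈ Metric.closedBall (0:ℂ) (7/8) := by
      intro θ
      rw [Metric.mem_closedBall, dist_zero_right]
      have habs1 : ‖((r:ℂ) * Complex.exp ((θ:ℂ) * Complex.I))‖ = r := by
        rw [norm_mul, Complex.norm_real, Real.norm_eq_abs, Complex.norm_exp_ofReal_mul_I, mul_one,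
          abs_of_pos hr0]
      have := norm_add_le z₀ ((r:ℂ) * Complex.exp ((θ:ℂ) * Complex.I))
      rw [habs1] at this
      have h3 : r < 5/8 := hr.2
      linarith
    have hcongr : (∫ θ in (0:ℝ)..(2*Real.pi), v (z₀ + (r:ℂ) * Complex.exp ((θ:ℂ) * Complex.I)))
        = ∫ θ in (0:ℝ)..(2*Real.pi), W (z₀ + (r:ℂ) * Complex.exp ((θ:ℂ) * Complex.I)) := by
      refine intervalIntegral.integral_congr ?_
      intro θ _
      exact (hWv _ (hcirc θ)).symm
    rw [hcongr] at h1
    rw [hWv z₀ hz₀78]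
    rw [le_div_iff₀ Real.two_pi_pos] at h1
    linarith
  -- annulus bound
  have hkey := circle_to_annulus W hWcont hW0 z₀ hz₀abs hWsub
  rw [← hBdef] at hkey
  -- comparison with density on B
  set f2 : ℂ → ℝ := fun ζ => ‖ζ‖ ^ 2 * ((1 - ‖ζ‖ ^ 2) ^ (α + 2) * v ζ)
    with hf2def
  set KR : ℝ := 16 * ((64:ℝ)/15) ^ (α+2) with hKRdef
  have hKRpos : 0 < KR := by
    rw [hKRdef]; positivity
  have hcont2 : ContinuousOn f2 B := by
    rw [hf2def]
    refine ContinuousOn.mul (continuous_norm.pow 2).continuousOn ?_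
    refine ContinuousOn.mul ?_ (hvc.mono hBsub01)
    refine ContinuousOn.rpow_const
      (continuous_const.sub (continuous_norm.pow 2)).continuousOn ?_
    intro ζ _
    exact Or.inr hα2
  have hint2 : IntegrableOn f2 B := ContinuousOn.integrableOn_compact hBcpt hcont2
  have hintW : IntegrableOn W B := ContinuousOn.integrableOn_compact hBcpt hWcont.continuousOn
  have hptB : ∀ ζ ∈ B, W ζ ≤ KR * f2 ζ := by
    intro ζ hζ
    have hζ1 : (1/4:ℝ) ≤ ‖ζ‖ := hζ.1
    have hζ2 : ‖ζ‖ ≤ 7/8 := hζ.2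
    have habsnn : (0:ℝ) ≤ ‖ζ‖ := norm_nonneg ζ
    have hs1 : (1/16:ℝ) ≤ ‖ζ‖ ^ 2 := by nlinarith
    have hs2 : ‖ζ‖ ^ 2 ≤ 49/64 := by nlinarith
    have ht1 : ((15:ℝ)/64) ^ (α+2) ≤ (1 - ‖ζ‖ ^ 2) ^ (α+2) :=
      Real.rpow_le_rpow (by norm_num) (by nlinarith) hα2
    have hPQ : ((64:ℝ)/15) ^ (α+2) * ((15:ℝ)/64) ^ (α+2) = 1 := by
      rw [← Real.mul_rpow (by norm_num) (by norm_num)]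
      norm_num
    have hP : (0:ℝ) < ((64:ℝ)/15) ^ (α+2) := Real.rpow_pos_of_pos (by norm_num) _
    have hQ : (0:ℝ) < ((15:ℝ)/64) ^ (α+2) := Real.rpow_pos_of_pos (by norm_num) _
    have hv0ζ : 0 ≤ v ζ := hv0 ζ (hBsub01 hζ)
    have hvW : W ζ = v ζ := hWv ζ (hBsub78 hζ)
    have hKRs : 1 ≤ KR * (‖ζ‖ ^ 2 * (1 - ‖ζ‖ ^ 2) ^ (α+2)) := by
      rw [hKRdef]
      have hstep : ((15:ℝ)/64) ^ (α+2) * (1/16)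
          ≤ (1 - ‖ζ‖ ^ 2) ^ (α+2) * (‖ζ‖ ^ 2) := by
        exact mul_le_mul ht1 hs1 (by norm_num) (le_trans hQ.le ht1)
      nlinarith
    rw [hvW, hf2def]
    calc v ζ = 1 * v ζ := (one_mul _).symm
      _ ≤ (KR * (‖ζ‖ ^ 2 * (1 - ‖ζ‖ ^ 2) ^ (α+2))) * v ζ :=
          mul_le_mul_of_nonneg_right hKRs hv0ζ
      _ = KR * (‖ζ‖ ^ 2 * ((1 - ‖ζ‖ ^ 2) ^ (α+2) * v ζ)) := by ring
  have hintKRf2 : IntegrableOn (fun ζ => KR * f2 ζ) B := by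
    exact hint2.smul KR
  have hBint : ∫ ζ in B, W ζ ≤ KR * ∫ ζ in B, f2 ζ := by
    have h1 := setIntegral_mono_on hintW hintKRf2 hBmeas hptB
    have h2 : ∫ ζ in B, KR * f2 ζ = KR * ∫ ζ in B, f2 ζ := by
      simpa [smul_eq_mul] using
        integral_smul (μ := volume.restrict B) KR f2
    linarith [h1, h2.le, h2.ge]
  have hf2nn : (0:ℝ) ≤ ∫ ζ in B, f2 ζ := by
    refine setIntegral_nonneg hBmeas ?_
    intro ζ hζ
    rw [hf2def]
    have := hv0 ζ (hBsub01 hζ)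
    have h1 : (0:ℝ) ≤ (1 - ‖ζ‖ ^ 2) ^ (α+2) := Real.rpow_nonneg (by nlinarith [hζ.2, norm_nonneg ζ]) _
    positivity
  -- lintegral comparison
  set μt := (volume.restrict (Metric.ball (0:ℂ) 1)).withDensity
      (fun z => ENNReal.ofReal (‖z‖ ^ 2 * ((1 - ‖z‖ ^ 2) ^ (α + 2) * v z)))
    with hμtdef
  have hstepk : ENNReal.ofReal (∫ ζ in B, f2 ζ) ≤ μt Set.univ := by
    have hnn : 0 ≤ᵐ[volume.restrict B] f2 := by
      refine (ae_restrict_iff' hBmeas).2 (Filter.Eventually.of_forall ?_)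
      intro ζ hζ
      rw [hf2def]
      have := hv0 ζ (hBsub01 hζ)
      have h1 : (0:ℝ) ≤ (1 - ‖ζ‖ ^ 2) ^ (α+2) :=
        Real.rpow_nonneg (by nlinarith [hζ.2, norm_nonneg ζ]) _
      positivity
    rw [ofReal_integral_eq_lintegral_ofReal hint2 hnn]
    have h2 : ∫⁻ ζ in B, ENNReal.ofReal (f2 ζ) ∂volume
        ≤ ∫⁻ ζ in Metric.ball (0:ℂ) 1, ENNReal.ofReal (f2 ζ) ∂volume :=
      lintegral_mono_set hBsub01
    refine le_trans h2 ?_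
    rw [hμtdef, withDensity_apply _ MeasurableSet.univ, Measure.restrict_univ]
  -- bound μ on the small ball
  set D1 : Set ℂ := Metric.ball (0:ℂ) (1/4) with hD1def
  have hD1sub : D1 ⊆ Metric.ball (0:ℂ) 1 := Metric.ball_subset_ball (by norm_num)
  have hμD1 : ((volume.restrict (Metric.ball (0:ℂ) 1)).withDensity
      fun z => ENNReal.ofReal ((1 - ‖z‖ ^ 2) ^ (α + 2) * v z)) D1
      ≤ ENNReal.ofReal (W z₀) * ENNReal.ofReal (volume D1).toReal := by
    rw [withDensity_apply _ measurableSet_ball,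
      Measure.restrict_restrict measurableSet_ball,
      Set.inter_eq_self_of_subset_left hD1sub]
    have hpt : ∀ᵐ z ∂(volume.restrict D1),
        ENNReal.ofReal ((1 - ‖z‖ ^ 2) ^ (α + 2) * v z) ≤ ENNReal.ofReal (W z₀) := by
      refine (ae_restrict_iff' measurableSet_ball).2 (Filter.Eventually.of_forall ?_)
      intro z hz
      have habsz : ‖z‖ < 1/4 := by
        have hz2 : z ∈ Metric.ball (0:ℂ) (1/4) := hz
        rw [Metric.mem_ball, dist_zero_right] at hz2
        exact hz2
      have habsnn : (0:ℝ) ≤ ‖z‖ := norm_nonneg z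
      have h1 : (1 - ‖z‖ ^ 2) ^ (α+2) ≤ 1 :=
        Real.rpow_le_one (by nlinarith) (by nlinarith) hα2
      have h1' : (0:ℝ) ≤ (1 - ‖z‖ ^ 2) ^ (α+2) :=
        Real.rpow_nonneg (by nlinarith) _
      have hz78 : z ∈ Metric.closedBall (0:ℂ) (7/8) := by
        rw [Metric.mem_closedBall, dist_zero_right]
        linarith
      have hz14 : z ∈ Metric.closedBall (0:ℂ) (1/4) := by
        rw [Metric.mem_closedBall, dist_zero_right]
        linarith
      have hvz : 0 ≤ v z := hv0 z (hD1sub hz)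
      refine ENNReal.ofReal_le_ofReal ?_
      have h2 : (1 - ‖z‖ ^ 2) ^ (α+2) * v z ≤ v z := by nlinarith
      have h3 : v z = W z := (hWv z hz78).symm
      have h4 : W z ≤ W z₀ := hz₀max hz14
      linarith
    calc ∫⁻ z in D1, ENNReal.ofReal ((1 - ‖z‖ ^ 2) ^ (α + 2) * v z) ∂volume
        ≤ ∫⁻ _ in D1, ENNReal.ofReal (W z₀) ∂volume := lintegral_mono_ae hpt
      _ = ENNReal.ofReal (W z₀) * volume D1 := setLIntegral_const D1 _
      _ = ENNReal.ofReal (W z₀) * ENNReal.ofReal (volume D1).toReal := by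
          rw [ENNReal.ofReal_toReal (measure_ball_lt_top).ne]
  -- combine
  have hWz₀ : W z₀ * (volume D1).toReal
      ≤ ((8 / Real.pi) * KR * (volume D1).toReal) * ∫ ζ in B, f2 ζ := by
    have hπ : (0:ℝ) < Real.pi := Real.pi_pos
    have h1 : W z₀ ≤ (8 / Real.pi) * (KR * ∫ ζ in B, f2 ζ) := by
      have h2 : Real.pi / 8 * W z₀ ≤ KR * ∫ ζ in B, f2 ζ := le_trans hkey hBint
      calc W z₀ = (8 / Real.pi) * (Real.pi / 8 * W z₀) := by field_simp; try ring
        _ ≤ (8 / Real.pi) * (KR * ∫ ζ in B, f2 ζ) :=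
            mul_le_mul_of_nonneg_left h2 (by positivity)
    have hVnn : (0:ℝ) ≤ (volume D1).toReal := ENNReal.toReal_nonneg
    calc W z₀ * (volume D1).toReal ≤ ((8 / Real.pi) * (KR * ∫ ζ in B, f2 ζ)) * (volume D1).toReal :=
          mul_le_mul_of_nonneg_right h1 hVnn
      _ = ((8 / Real.pi) * KR * (volume D1).toReal) * ∫ ζ in B, f2 ζ := by ring
  calc ((volume.restrict (Metric.ball (0:ℂ) 1)).withDensity
      fun z => ENNReal.ofReal ((1 - ‖z‖ ^ 2) ^ (α + 2) * v z)) D1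
      ≤ ENNReal.ofReal (W z₀) * ENNReal.ofReal (volume D1).toReal := hμD1
    _ = ENNReal.ofReal (W z₀ * (volume D1).toReal) := by
        rw [ENNReal.ofReal_mul (hW0 z₀)]
    _ ≤ ENNReal.ofReal (((8 / Real.pi) * KR * (volume D1).toReal) * ∫ ζ in B, f2 ζ) :=
        ENNReal.ofReal_le_ofReal hWz₀
    _ = ENNReal.ofReal ((8 / Real.pi) * KR * (volume D1).toReal)
          * ENNReal.ofReal (∫ ζ in B, f2 ζ) := by
        rw [ENNReal.ofReal_mul (by positivity)]
    _ ≤ ENNReal.ofReal ((8 / Real.pi) * KR * (volume D1).toReal) * μt Set.univ :=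
        mul_le_mul_right hstepk _
    _ = ENNReal.ofReal ((8 / Real.pi) * (16 * ((64:ℝ)/15) ^ (α+2))
          * (volume (Metric.ball (0:ℂ) (1/4))).toReal) * μt Set.univ := by
        rw [hKRdef, hD1def]
lemma quarter_bound (α : ℝ) (v : ℂ → ℝ) {s : Set ℂ} (hs : MeasurableSet s)
    (h14 : ∀ z ∈ s, 1/4 ≤ ‖z‖) :
    ((volume.restrict (Metric.ball (0:ℂ) 1)).withDensity
        fun z => ENNReal.ofReal ((1 - ‖z‖ ^ 2) ^ (α + 2) * v z)) s
    ≤ ENNReal.ofReal 16 *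
      ((volume.restrict (Metric.ball (0:ℂ) 1)).withDensity
        fun z => ENNReal.ofReal (‖z‖ ^ 2 * ((1 - ‖z‖ ^ 2) ^ (α + 2) * v z))) s := by
  rw [withDensity_apply _ hs, withDensity_apply _ hs]
  have hpt : ∀ᵐ z ∂((volume.restrict (Metric.ball (0:ℂ) 1)).restrict s),
      ENNReal.ofReal ((1 - ‖z‖ ^ 2) ^ (α + 2) * v z)
      ≤ ENNReal.ofReal 16 *
        ENNReal.ofReal (‖z‖ ^ 2 * ((1 - ‖z‖ ^ 2) ^ (α + 2) * v z)) := by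
    refine (ae_restrict_iff' hs).2 (Filter.Eventually.of_forall ?_)
    intro z hz
    refine aux_ofReal_le_mul (by norm_num) ?_
    have := h14 z hz
    nlinarith
  calc ∫⁻ z in s, ENNReal.ofReal ((1 - ‖z‖ ^ 2) ^ (α + 2) * v z)
        ∂(volume.restrict (Metric.ball (0:ℂ) 1))
      ≤ ∫⁻ z in s, ENNReal.ofReal 16 *
          ENNReal.ofReal (‖z‖ ^ 2 * ((1 - ‖z‖ ^ 2) ^ (α + 2) * v z))
        ∂(volume.restrict (Metric.ball (0:ℂ) 1)) := lintegral_mono_ae hpt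
    _ = ENNReal.ofReal 16 * ∫⁻ z in s,
          ENNReal.ofReal (‖z‖ ^ 2 * ((1 - ‖z‖ ^ 2) ^ (α + 2) * v z))
        ∂(volume.restrict (Metric.ball (0:ℂ) 1)) :=
        lintegral_const_mul' _ _ ENNReal.ofReal_ne_top

/-- For a nonnegative subharmonic `v` on the disc, with
`dμ = (1−|z|²)^{α+2} v dA` and `dμ̃ = |z|² dμ`, there is `0 < c_α < 1`,
independent of `v`, with `c_α ‖μ‖_{C(α)} ≤ ‖μ̃‖_{C(α)} ≤ ‖μ‖_{C(α)}`. -/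
theorem stmt_16 (α : ℝ) (hα : -1 ≤ α) :
    ∃ c : ℝ, 0 < c ∧ c < 1 ∧
      ∀ v : ℂ → ℝ, SubharmonicOnDisc v → (∀ z ∈ Metric.ball (0:ℂ) 1, 0 ≤ v z) →
        ENNReal.ofReal c *
            carlesonNorm α
              ((volume.restrict (Metric.ball (0:ℂ) 1)).withDensity
                fun z => ENNReal.ofReal ((1 - ‖z‖ ^ 2) ^ (α + 2) * v z))
          ≤ carlesonNorm α
              ((volume.restrict (Metric.ball (0:ℂ) 1)).withDensity
                fun z => ENNReal.ofReal
                  (‖z‖ ^ 2 * ((1 - ‖z‖ ^ 2) ^ (α + 2) * v z))) ∧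
        carlesonNorm α
            ((volume.restrict (Metric.ball (0:ℂ) 1)).withDensity
              fun z => ENNReal.ofReal
                (‖z‖ ^ 2 * ((1 - ‖z‖ ^ 2) ^ (α + 2) * v z)))
          ≤ carlesonNorm α
              ((volume.restrict (Metric.ball (0:ℂ) 1)).withDensity
                fun z => ENNReal.ofReal ((1 - ‖z‖ ^ 2) ^ (α + 2) * v z)) := by
  have hα2 : (0:ℝ) ≤ α + 2 := by linarith
  set K1 : ℝ := (8 / Real.pi) * (16 * ((64:ℝ)/15) ^ (α+2))
      * (volume (Metric.ball (0:ℂ) (1/4))).toReal with hK1def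
  set Cinv : ℝ≥0∞ := (ENNReal.ofReal (((15:ℝ)/16) ^ (α+2)))⁻¹ with hCinvdef
  set C : ℝ≥0∞ := ENNReal.ofReal 16 + (ENNReal.ofReal K1 + ENNReal.ofReal 16) * Cinv
    with hCdef
  have hCinvtop : Cinv ≠ ⊤ := by
    rw [hCinvdef]
    refine ENNReal.inv_ne_top.2 ?_
    simp only [ne_eq, ENNReal.ofReal_eq_zero, not_le]
    exact Real.rpow_pos_of_pos (by norm_num) _
  have hCtop : C ≠ ⊤ := by
    rw [hCdef]
    exact ENNReal.add_ne_top.2 ⟨ENNReal.ofReal_ne_top,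
      ENNReal.mul_ne_top (ENNReal.add_ne_top.2 ⟨ENNReal.ofReal_ne_top, ENNReal.ofReal_ne_top⟩)
        hCinvtop⟩
  refine ⟨1 / (C.toReal + 2), by positivity, ?_, ?_⟩
  · rw [div_lt_one (by positivity)]
    have := ENNReal.toReal_nonneg (a := C)
    linarith
  intro v hv hv0
  obtain ⟨hvc, hvs⟩ := hv
  set μ := (volume.restrict (Metric.ball (0:ℂ) 1)).withDensity
      (fun z => ENNReal.ofReal ((1 - ‖z‖ ^ 2) ^ (α + 2) * v z)) with hμdef
  set μt := (volume.restrict (Metric.ball (0:ℂ) 1)).withDensity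
      (fun z => ENNReal.ofReal (‖z‖ ^ 2 * ((1 - ‖z‖ ^ 2) ^ (α + 2) * v z)))
    with hμtdef
  -- easy half
  have h_easy : carlesonNorm α μt ≤ carlesonNorm α μ := by
    have hle : μt ≤ μ := by
      rw [hμdef, hμtdef]
      refine withDensity_mono ?_
      filter_upwards [ae_restrict_mem measurableSet_ball] with z hz
      have : ‖z‖ < 1 := by
        rwa [mem_ball_zero_iff] at hz
      exact aux_ofReal_mul_le (sq_nonneg _) (by nlinarith [norm_nonneg z])
    exact iSup_mono fun a => ENNReal.div_le_div_right ((Measure.le_iff'.1 hle) _) _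
  refine ⟨?_, h_easy⟩
  -- hard half
  have hμtuniv : μt Set.univ ≤ carlesonNorm α μt := by
    have hball_sub : Metric.ball (0:ℂ) 1 ⊆ carlesonBox 0 := by
      intro z hz
      have hz1 : ‖z‖ < 1 := by rwa [mem_ball_zero_iff] at hz
      refine ⟨by simp, hz1, ?_⟩
      simp [Real.pi_pos.le]
    have h1 : μt Set.univ = μt (carlesonBox 0) := by
      rw [hμtdef, withDensity_apply _ MeasurableSet.univ,
        withDensity_apply _ (measurableSet_carlesonBox 0), Measure.restrict_univ,
        Measure.restrict_restrict (measurableSet_carlesonBox 0),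
        Set.inter_eq_self_of_subset_right hball_sub]
    have h2 : μt (carlesonBox 0) / ENNReal.ofReal ((1 - ‖(0:ℂ)‖ ^ 2) ^ (α + 2))
        ≤ carlesonNorm α μt := by
      exact le_iSup (fun a : Metric.ball (0:ℂ) 1 => μt (carlesonBox (a:ℂ)) /
        ENNReal.ofReal ((1 - ‖(a : ℂ)‖ ^ 2) ^ (α + 2)))
        (⟨0, by simp [Metric.mem_ball]⟩ : Metric.ball (0:ℂ) 1)
    rw [h1]
    have h3 : ENNReal.ofReal ((1 - ‖(0:ℂ)‖ ^ 2) ^ (α + 2)) = 1 := by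
      simp [Real.one_rpow]
    rw [h3, div_one] at h2
    exact h2
  have hKey : carlesonNorm α μ ≤ C * carlesonNorm α μt := by
    rw [carlesonNorm]
    refine iSup_le ?_
    rintro ⟨a, ha⟩
    have habs : ‖a‖ < 1 := by rwa [mem_ball_zero_iff] at ha
    have habsnn : (0:ℝ) ≤ ‖a‖ := norm_nonneg a
    have hwa_pos : (0:ℝ) < (1 - ‖a‖ ^ 2) ^ (α + 2) :=
      Real.rpow_pos_of_pos (by nlinarith) _
    set wa : ℝ≥0∞ := ENNReal.ofReal ((1 - ‖a‖ ^ 2) ^ (α + 2)) with hwadef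
    have hwa0 : wa ≠ 0 := by
      rw [hwadef]; simp only [ne_eq, ENNReal.ofReal_eq_zero, not_le]; exact hwa_pos
    have hwatop : wa ≠ ⊤ := ENNReal.ofReal_ne_top
    have hterm : μt (carlesonBox a) / wa ≤ carlesonNorm α μt :=
      le_iSup (fun b : Metric.ball (0:ℂ) 1 => μt (carlesonBox (b:ℂ)) /
        ENNReal.ofReal ((1 - ‖(b : ℂ)‖ ^ 2) ^ (α + 2)))
        (⟨a, ha⟩ : Metric.ball (0:ℂ) 1)
    have hbox_le : μt (carlesonBox a) ≤ carlesonNorm α μt * wa :=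
      (ENNReal.div_le_iff hwa0 hwatop).1 hterm
    show μ (carlesonBox a) / wa ≤ C * carlesonNorm α μt
    rcases le_or_gt (1/4 : ℝ) (‖a‖) with hcase | hcase
    · -- boxes away from the center
      have hq : μ (carlesonBox a) ≤ ENNReal.ofReal 16 * μt (carlesonBox a) := by
        rw [hμdef, hμtdef]
        refine quarter_bound α v (measurableSet_carlesonBox a) ?_
        intro z hz
        exact le_trans hcase hz.1
      have h16C : ENNReal.ofReal 16 ≤ C := by
        rw [hCdef]; exact le_self_add
      refine (ENNReal.div_le_iff hwa0 hwatop).2 ?_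
      calc μ (carlesonBox a) ≤ ENNReal.ofReal 16 * μt (carlesonBox a) := hq
        _ ≤ ENNReal.ofReal 16 * (carlesonNorm α μt * wa) := mul_le_mul_right hbox_le _
        _ = (ENNReal.ofReal 16 * carlesonNorm α μt) * wa := by rw [mul_assoc]
        _ ≤ (C * carlesonNorm α μt) * wa := by
            exact mul_le_mul_left (mul_le_mul_left h16C _) _
    · -- boxes near the center
      have huniv : μ Set.univ ≤ (ENNReal.ofReal K1 + ENNReal.ofReal 16) * μt Set.univ := by
        have hsplit := measure_union_le (μ := μ) (Metric.ball (0:ℂ) (1/4))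
          (Metric.ball (0:ℂ) (1/4))ᶜ
        rw [Set.union_compl_self] at hsplit
        have h1 : μ (Metric.ball (0:ℂ) (1/4)) ≤ ENNReal.ofReal K1 * μt Set.univ := by
          rw [hμdef, hμtdef, hK1def]
          exact hard_bound α hα v hvc hvs hv0
        have h2 : μ ((Metric.ball (0:ℂ) (1/4))ᶜ) ≤ ENNReal.ofReal 16 * μt Set.univ := by
          have h3 : μ ((Metric.ball (0:ℂ) (1/4))ᶜ)
              ≤ ENNReal.ofReal 16 * μt ((Metric.ball (0:ℂ) (1/4))ᶜ) := by
            rw [hμdef, hμtdef]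
            refine quarter_bound α v measurableSet_ball.compl ?_
            intro z hz
            rw [Set.mem_compl_iff, Metric.mem_ball, dist_zero_right,
              not_lt] at hz
            exact hz
          exact le_trans h3 (mul_le_mul_right (measure_mono (Set.subset_univ _)) _)
        calc μ Set.univ ≤ μ (Metric.ball (0:ℂ) (1/4)) + μ ((Metric.ball (0:ℂ) (1/4))ᶜ) := hsplit
          _ ≤ ENNReal.ofReal K1 * μt Set.univ + ENNReal.ofReal 16 * μt Set.univ :=
              add_le_add h1 h2
          _ = (ENNReal.ofReal K1 + ENNReal.ofReal 16) * μt Set.univ := by rw [add_mul]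
      have hwalb : ENNReal.ofReal (((15:ℝ)/16) ^ (α+2)) ≤ wa := by
        rw [hwadef]
        refine ENNReal.ofReal_le_ofReal ?_
        exact Real.rpow_le_rpow (by norm_num) (by nlinarith) hα2
      calc μ (carlesonBox a) / wa ≤ μ Set.univ / wa :=
            ENNReal.div_le_div_right (measure_mono (Set.subset_univ _)) _
        _ = μ Set.univ * wa⁻¹ := by rw [div_eq_mul_inv]
        _ ≤ μ Set.univ * Cinv := by
            refine mul_le_mul_right ?_ _
            rw [hCinvdef]
            exact ENNReal.inv_le_inv' hwalb
        _ ≤ ((ENNReal.ofReal K1 + ENNReal.ofReal 16) * μt Set.univ) * Cinv :=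
            mul_le_mul_left huniv _
        _ ≤ ((ENNReal.ofReal K1 + ENNReal.ofReal 16) * carlesonNorm α μt) * Cinv :=
            mul_le_mul_left (mul_le_mul_right hμtuniv _) _
        _ = ((ENNReal.ofReal K1 + ENNReal.ofReal 16) * Cinv) * carlesonNorm α μt := by
            ring
        _ ≤ C * carlesonNorm α μt := by
            refine mul_le_mul_left ?_ _
            rw [hCdef]
            exact le_add_self
  -- conclude
  have hc1 : ENNReal.ofReal (1 / (C.toReal + 2)) * C ≤ 1 := by
    have h0 : ENNReal.ofReal (1 / (C.toReal + 2)) * C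
        = ENNReal.ofReal (1 / (C.toReal + 2)) * ENNReal.ofReal C.toReal := by
      rw [ENNReal.ofReal_toReal hCtop]
    rw [h0, ← ENNReal.ofReal_mul (by positivity)]
    refine ENNReal.ofReal_le_one.2 ?_
    rw [div_mul_eq_mul_div, one_mul, div_le_one (by positivity)]
    linarith [ENNReal.toReal_nonneg (a := C)]
  calc ENNReal.ofReal (1 / (C.toReal + 2)) * carlesonNorm α μ
      ≤ ENNReal.ofReal (1 / (C.toReal + 2)) * (C * carlesonNorm α μt) :=
        mul_le_mul_right hKey _
    _ = (ENNReal.ofReal (1 / (C.toReal + 2)) * C) * carlesonNorm α μt := by rw [mul_assoc]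
    _ ≤ 1 * carlesonNorm α μt := mul_le_mul_left hc1 _
    _ = carlesonNorm α μt := one_mul _
end
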